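/- Let σ' be a nonempty finite CNN request sequence whose last request is r' = r(x',y'), and let σ'' = σ', r(x'',y''). Fix λ ∈ (0,1) and α with 0 < α < (1−λ)/(2(1+λ)). Suppose F_{W_{σ''}} attains its infimum over M³ at a triple (s_1,s_2,s_3) such that {s_1,s_2,s_3} has cardinality 1 or 2. Then inf G_{W_{σ''}} ≥ inf G_{W_{σ'}}. -/

import Mathlib

noncomputable section

/-- The L1 metric on `ℝ²` (the CNN metric space). -/
def dL1 (p q : ℝ × ℝ) : ℝ := |p.1 - q.1| + |p.2 - q.2|

/-- The CNN request associated with a point `(x, y)`. -/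
def req (p : ℝ × ℝ) : Set (ℝ × ℝ) := {q | q.1 = p.1 ∨ q.2 = p.2}

/-- The work function of a finite CNN request sequence (requests listed in order of arrival),
starting at origin `O`. -/
noncomputable def WF (O : ℝ × ℝ) : List (ℝ × ℝ) → (ℝ × ℝ) → ℝ
  | [], s => dL1 O s
  | p :: l, s => sInf ((fun t => dL1 O t + WF t l s) '' req p)

/-- The slack of a point `s` to a nonempty set `C` with respect to `W`. -/
noncomputable def Sl (lam : ℝ) (W : ℝ × ℝ → ℝ) (s : ℝ × ℝ) (C : Set (ℝ × ℝ)) : ℝ :=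
  sInf ((fun t => W t + lam * dL1 t s) '' C) - W s

/-- The rectangle spanned by two points of `ℝ²`. -/
def Boks (s1 s2 : ℝ × ℝ) : Set (ℝ × ℝ) :=
  {p | p.1 ∈ Set.uIcc s1.1 s2.1 ∧ p.2 ∈ Set.uIcc s1.2 s2.2}

/-- `H_W(s₁,s₂) = (1/2)W(s₁) + (1/2)W(s₂) − (λ/2)d(s₁,s₂)`. -/
noncomputable def Hf (lam : ℝ) (W : ℝ × ℝ → ℝ) (s1 s2 : ℝ × ℝ) : ℝ :=
  (1 / 2) * W s1 + (1 / 2) * W s2 - (lam / 2) * dL1 s1 s2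

/-- `F_W(s₁,s₂,s₃) = H_W(s₁,s₂) − α·Sl_W(s₃;{s₁,s₂})`. -/
noncomputable def Ff (lam α : ℝ) (W : ℝ × ℝ → ℝ) (s1 s2 s3 : ℝ × ℝ) : ℝ :=
  Hf lam W s1 s2 - α * Sl lam W s3 {s1, s2}

/-- `G_W(s₁,s₂,s₃) = H_W(s₁,s₂) − α·Sl_W(s₃;Boks(s₁,s₂))`. -/
noncomputable def Gf (lam α : ℝ) (W : ℝ × ℝ → ℝ) (s1 s2 s3 : ℝ × ℝ) : ℝ :=
  Hf lam W s1 s2 - α * Sl lam W s3 (Boks s1 s2)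

/-- `inf_{M³} G_W`. -/
noncomputable def infG (lam α : ℝ) (W : ℝ × ℝ → ℝ) : ℝ :=
  sInf (Set.range fun q : (ℝ × ℝ) × (ℝ × ℝ) × (ℝ × ℝ) => Gf lam α W q.1 q.2.1 q.2.2)



lemma dL1_nonneg (p q : ℝ × ℝ) : 0 ≤ dL1 p q := by
  unfold dL1; positivity

lemma dL1_self (p : ℝ × ℝ) : dL1 p p = 0 := by simp [dL1]

lemma dL1_comm (p q : ℝ × ℝ) : dL1 p q = dL1 q p := by
  unfold dL1; rw [abs_sub_comm, abs_sub_comm p.2]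

lemma dL1_triangle (p q r : ℝ × ℝ) : dL1 p r ≤ dL1 p q + dL1 q r := by
  unfold dL1
  have h1 := abs_sub_le p.1 q.1 r.1
  have h2 := abs_sub_le p.2 q.2 r.2
  linarith

lemma req_self (p : ℝ × ℝ) : p ∈ req p := Or.inl rfl

lemma req_nonempty (p : ℝ × ℝ) : (req p).Nonempty := ⟨p, req_self p⟩

lemma WF_ge (l : List (ℝ × ℝ)) : ∀ O s, dL1 O s ≤ WF O l s := by
  induction l with
  | nil => intro O s; simp [WF]
  | cons p l ih =>
    intro O s
    rw [WF]
    apply le_csInf ((req_nonempty p).image _)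
    rintro v ⟨t, _, rfl⟩
    calc dL1 O s ≤ dL1 O t + dL1 t s := dL1_triangle _ _ _
    _ ≤ dL1 O t + WF t l s := by linarith [ih t s]

lemma WF_nonneg (O : ℝ × ℝ) (l : List (ℝ × ℝ)) (s : ℝ × ℝ) : 0 ≤ WF O l s :=
  le_trans (dL1_nonneg O s) (WF_ge l O s)

lemma WF_bdd (O : ℝ × ℝ) (l : List (ℝ × ℝ)) (s : ℝ × ℝ) (C : Set (ℝ × ℝ)) :
    BddBelow ((fun t => dL1 O t + WF t l s) '' C) := by
  refine ⟨0, ?_⟩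
  rintro v ⟨t, _, rfl⟩
  have := dL1_nonneg O t
  have := WF_nonneg t l s
  simp only; linarith

lemma WF_lipschitz (l : List (ℝ × ℝ)) : ∀ O s s', WF O l s ≤ WF O l s' + dL1 s' s := by
  induction l with
  | nil => intro O s s'; simpa [WF] using dL1_triangle O s' s
  | cons p l ih =>
    intro O s s'
    rw [WF, WF, ← sub_le_iff_le_add]
    apply le_csInf ((req_nonempty p).image _)
    rintro v ⟨t, ht, rfl⟩
    rw [sub_le_iff_le_add]
    calc sInf ((fun t => dL1 O t + WF t l s) '' req p) ≤ dL1 O t + WF t l s :=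
        csInf_le (WF_bdd O l s _) ⟨t, ht, rfl⟩
    _ ≤ dL1 O t + WF t l s' + dL1 s' s := by linarith [ih t s s']

lemma WF_append_ge (L : List (ℝ × ℝ)) (p : ℝ × ℝ) : ∀ O s,
    sInf ((fun t => WF O L t + dL1 t s) '' req p) ≤ WF O (L ++ [p]) s := by
  induction L with
  | nil =>
    intro O s
    simp only [List.nil_append, WF]
    apply le_csInf ((req_nonempty p).image _)
    rintro v ⟨t, ht, rfl⟩
    refine csInf_le ⟨0, ?_⟩ ⟨t, ht, rfl⟩
    rintro v ⟨u, _, rfl⟩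
    simp only [WF]
    linarith [dL1_nonneg O u, dL1_nonneg u s]
  | cons q L ih =>
    intro O s
    rw [List.cons_append, WF]
    apply le_csInf ((req_nonempty q).image _)
    rintro v ⟨u, hu, rfl⟩
    simp only
    have h1 : sInf ((fun t => WF u L t + dL1 t s) '' req p) ≤ WF u (L ++ [p]) s := ih u s
    rw [← sub_le_iff_le_add']
    refine le_trans ?_ h1
    apply le_csInf ((req_nonempty p).image _)
    rintro v ⟨t, ht, rfl⟩
    simp only
    rw [sub_le_iff_le_add']
    have h2 : WF O (q :: L) t ≤ dL1 O u + WF u L t := by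
      rw [WF]; exact csInf_le (WF_bdd O L t _) ⟨u, hu, rfl⟩
    have h3 : sInf ((fun t => WF O (q :: L) t + dL1 t s) '' req p) ≤ WF O (q :: L) t + dL1 t s := by
      refine csInf_le ⟨0, ?_⟩ ⟨t, ht, rfl⟩
      rintro v ⟨w, _, rfl⟩
      simp only; linarith [WF_nonneg O (q :: L) w, dL1_nonneg w s]
    linarith

lemma WF_exists_near (L : List (ℝ × ℝ)) (p O s : ℝ × ℝ) {ε : ℝ} (hε : 0 < ε) :
    ∃ t ∈ req p, WF O L t + dL1 t s < WF O (L ++ [p]) s + ε := by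
  obtain ⟨v, ⟨t, ht, rfl⟩, hv⟩ :=
    Real.lt_sInf_add_pos ((req_nonempty p).image (fun t => WF O L t + dL1 t s)) hε
  exact ⟨t, ht, lt_of_lt_of_le hv (by linarith [WF_append_ge L p O s])⟩

lemma WF_mono_append (L : List (ℝ × ℝ)) (p O s : ℝ × ℝ) :
    WF O L s ≤ WF O (L ++ [p]) s := by
  by_contra h
  push_neg at h
  obtain ⟨t, _, ht⟩ := WF_exists_near L p O s (show 0 < (WF O L s - WF O (L ++ [p]) s)/2 by linarith)
  have := WF_lipschitz L O s t
  linarith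


lemma left_mem_Boks (s1 s2 : ℝ × ℝ) : s1 ∈ Boks s1 s2 :=
  ⟨Set.left_mem_uIcc, Set.left_mem_uIcc⟩

lemma right_mem_Boks (s1 s2 : ℝ × ℝ) : s2 ∈ Boks s1 s2 :=
  ⟨Set.right_mem_uIcc, Set.right_mem_uIcc⟩

lemma Boks_self (s : ℝ × ℝ) : Boks s s = {s} := by
  ext p
  simp [Boks, Set.uIcc_self, Prod.ext_iff]

/-- Slack sets are bounded below by `0` when `W ≥ 0`. -/
lemma Sl_bdd (lam : ℝ) (hlam : 0 ≤ lam) (W : ℝ × ℝ → ℝ) (hW : ∀ s, 0 ≤ W s) (s : ℝ × ℝ)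
    (C : Set (ℝ × ℝ)) : BddBelow ((fun t => W t + lam * dL1 t s) '' C) := by
  refine ⟨0, ?_⟩
  rintro v ⟨t, _, rfl⟩
  have := hW t
  have := mul_nonneg hlam (dL1_nonneg t s)
  simp only; linarith

/-- Slack of a point of `C` to `C` is nonpositive. -/
lemma Sl_nonpos (lam : ℝ) (hlam : 0 ≤ lam) (W : ℝ × ℝ → ℝ) (hW : ∀ s, 0 ≤ W s) (s : ℝ × ℝ)
    (C : Set (ℝ × ℝ)) (hs : s ∈ C) : Sl lam W s C ≤ 0 := by
  unfold Sl
  have h : sInf ((fun t => W t + lam * dL1 t s) '' C) ≤ W s + lam * dL1 s s :=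
    csInf_le (Sl_bdd lam hlam W hW s C) ⟨s, hs, rfl⟩
  rw [dL1_self] at h
  linarith

lemma Sl_singleton (lam : ℝ) (W : ℝ × ℝ → ℝ) (s t : ℝ × ℝ) :
    Sl lam W s {t} = W t + lam * dL1 t s - W s := by
  unfold Sl
  rw [Set.image_singleton, csInf_singleton]

lemma Sl_mono (lam : ℝ) (hlam : 0 ≤ lam) (W : ℝ × ℝ → ℝ) (hW : ∀ s, 0 ≤ W s) (s : ℝ × ℝ)
    {C D : Set (ℝ × ℝ)} (hC : C.Nonempty) (hCD : C ⊆ D) : Sl lam W s D ≤ Sl lam W s C := by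
  unfold Sl
  have := csInf_le_csInf (Sl_bdd lam hlam W hW s D) (hC.image _) (Set.image_mono hCD)
  linarith

/-- `G_W ≥ 0` for any `1`-Lipschitz `W` dominating `dL1 O ·`. -/
lemma Gf_nonneg (lam α : ℝ) (h0 : 0 < lam) (h1 : lam < 1)
    (hα0 : 0 < α) (hα1 : 2 * α * (1 + lam) ≤ 1 - lam)
    (O : ℝ × ℝ) (W : ℝ × ℝ → ℝ) (hW1 : ∀ s, dL1 O s ≤ W s)
    (hW2 : ∀ s s', W s ≤ W s' + dL1 s' s) (a b c : ℝ × ℝ) :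
    0 ≤ Gf lam α W a b c := by
  have hWpos : ∀ s, 0 ≤ W s := fun s => le_trans (dL1_nonneg O s) (hW1 s)
  set t : ℝ × ℝ := (a.1, b.2) with ht
  have htB : t ∈ Boks a b := ⟨Set.left_mem_uIcc, Set.right_mem_uIcc⟩
  have hsplit : dL1 a t + dL1 t b = dL1 a b := by
    simp only [dL1, ht]
    simp only [sub_self, abs_zero, zero_add, add_zero]
    ring
  have hWt1 : W t ≤ W a + dL1 a t := hW2 t a
  have hWt2 : W t ≤ W b + dL1 b t := hW2 t b
  have hSl : Sl lam W c (Boks a b) ≤ W t + lam * dL1 t c - W c := by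
    unfold Sl
    have h := csInf_le (Sl_bdd lam h0.le W hWpos c (Boks a b)) ⟨t, htB, rfl⟩
    simp only at h
    linarith
  have hWc1 : W t - dL1 t c ≤ W c := by have := hW2 t c; rw [dL1_comm c t] at this; linarith
  have hWc2 : dL1 t c - W t ≤ W c := by
    have h3 := dL1_triangle t O c
    have h4 := hW1 t
    have h5 := hW1 c
    rw [dL1_comm t O] at h3
    linarith
  have hD : 0 ≤ dL1 t c := dL1_nonneg t c
  have hWtpos : 0 ≤ W t := hWpos t
  have key : W t + lam * dL1 t c - W c ≤ (1 + lam) * W t := by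
    rcases le_total (dL1 t c) (W t) with h | h
    · nlinarith
    · nlinarith
  have hab : dL1 a b ≤ W a + W b := by
    have h3 := dL1_triangle a O b
    have h4 := hW1 a
    have h5 := hW1 b
    rw [dL1_comm a O] at h3
    linarith
  have hdba : dL1 b t = dL1 t b := dL1_comm b t
  unfold Gf Hf
  nlinarith [mul_le_mul_of_nonneg_left key hα0.le, hWpos a, hWpos b,
    dL1_nonneg a t, dL1_nonneg t b, dL1_nonneg a b,
    mul_nonneg (mul_nonneg hα0.le h0.le) (dL1_nonneg a b)]

/-- If `F_{W_{σ''}}` is minimized at a triple `(s₁,s₂,s₃)` with `{s₁,s₂,s₃}` of cardinality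
1 or 2, then `inf G_{W_{σ''}} ≥ inf G_{W_{σ'}}`. -/
theorem infG_nondecreasing (lam α : ℝ) (h0 : 0 < lam) (h1 : lam < 1)
    (hα0 : 0 < α) (hα1 : α < (1 - lam) / (2 * (1 + lam)))
    (O : ℝ × ℝ) (l : List (ℝ × ℝ)) (x' y' x'' y'' : ℝ) (s1 s2 s3 : ℝ × ℝ)
    (hmin : ∀ t1 t2 t3 : ℝ × ℝ,
      Ff lam α (WF O (l ++ [(x', y'), (x'', y'')])) s1 s2 s3 ≤
        Ff lam α (WF O (l ++ [(x', y'), (x'', y'')])) t1 t2 t3)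
    (hcard : ({s1, s2, s3} : Set (ℝ × ℝ)).ncard ≤ 2) :
    infG lam α (WF O (l ++ [(x', y'), (x'', y'')])) ≥
      infG lam α (WF O (l ++ [(x', y')])) := by
  have hα1' : 2 * α * (1 + lam) < 1 - lam := by
    rw [lt_div_iff₀ (by linarith : (0:ℝ) < 2 * (1 + lam))] at hα1
    linarith
  set L' := l ++ [(x', y')] with hL'
  have hLL : l ++ [(x', y'), (x'', y'')] = L' ++ [(x'', y'')] := by
    rw [hL', List.append_assoc]
    rfl
  set W' := WF O L' with hW'def
  set W'' := WF O (l ++ [(x', y'), (x'', y'')]) with hW''def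
  have hW''1 : ∀ s, dL1 O s ≤ W'' s := fun s => WF_ge _ O s
  have hW''2 : ∀ s s', W'' s ≤ W'' s' + dL1 s' s := fun s s' => WF_lipschitz _ O s s'
  have hW'1 : ∀ s, dL1 O s ≤ W' s := fun s => WF_ge _ O s
  have hW'2 : ∀ s s', W' s ≤ W' s' + dL1 s' s := fun s s' => WF_lipschitz _ O s s'
  have hW'pos : ∀ s, 0 ≤ W' s := fun s => WF_nonneg O _ s
  have hW''pos : ∀ s, 0 ≤ W'' s := fun s => WF_nonneg O _ s
  have hmono : ∀ s, W' s ≤ W'' s := by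
    intro s
    rw [hW''def, hLL]
    exact WF_mono_append L' _ O s
  have hnear : ∀ s (ε : ℝ), 0 < ε → ∃ t ∈ req (x'', y''), W' t + dL1 t s < W'' s + ε := by
    intro s ε hε
    rw [hW''def, hLL]
    exact WF_exists_near L' _ O s hε
  set m := Ff lam α W'' s1 s2 s3 with hmdef
  -- Step 1 : infG W'' ≥ m
  have hGF : ∀ q1 q2 q3 : ℝ × ℝ, Ff lam α W'' q1 q2 q3 ≤ Gf lam α W'' q1 q2 q3 := by
    intro q1 q2 q3
    unfold Ff Gf
    have hsub : ({q1, q2} : Set (ℝ × ℝ)) ⊆ Boks q1 q2 := by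
      rintro x hx
      rcases hx with rfl | hx
      · exact left_mem_Boks _ _
      · rw [Set.mem_singleton_iff] at hx; subst hx; exact right_mem_Boks _ _
    have hsl := Sl_mono lam h0.le W'' hW''pos q3 ⟨q1, Set.mem_insert _ _⟩ hsub
    have := mul_le_mul_of_nonneg_left hsl hα0.le
    linarith
  have hstep1 : m ≤ infG lam α W'' := by
    unfold infG
    refine le_csInf ⟨_, ⟨(s1, s2, s3), rfl⟩⟩ ?_
    rintro v ⟨⟨q1, q2, q3⟩, rfl⟩
    exact le_trans (hmin q1 q2 q3) (hGF q1 q2 q3)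
  have hGbdd : BddBelow (Set.range fun q : (ℝ × ℝ) × (ℝ × ℝ) × (ℝ × ℝ) =>
      Gf lam α W' q.1 q.2.1 q.2.2) := by
    refine ⟨0, ?_⟩
    rintro v ⟨q, rfl⟩
    exact Gf_nonneg lam α h0 h1 hα0 hα1'.le O W' hW'1 hW'2 _ _ _
  have hinfle : ∀ a b c : ℝ × ℝ, infG lam α W' ≤ Gf lam α W' a b c := by
    intro a b c
    exact csInf_le hGbdd ⟨(a, b, c), rfl⟩
  have hcases : s1 = s2 ∨ s3 = s1 ∨ s3 = s2 := by
    by_contra hc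
    push_neg at hc
    obtain ⟨h12, h31, h32⟩ := hc
    have h3 : ({s1, s2, s3} : Set (ℝ × ℝ)).ncard = 3 := by
      rw [Set.ncard_eq_three]
      exact ⟨s1, s2, s3, h12, fun h => h31 h.symm, fun h => h32 h.symm, rfl⟩
    omega
  have hstep2 : ∀ ε : ℝ, 0 < ε → infG lam α W' ≤ m + 2 * ε := by
    intro ε hε
    rcases hcases with h | h
    · -- Case A : s1 = s2
      obtain ⟨t, htreq, htn⟩ := hnear s1 ε hε
      have hm : m = W'' s1 - α * (W'' s1 + lam * dL1 s1 s3 - W'' s3) := by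
        rw [hmdef, ← h]
        unfold Ff Hf
        rw [Set.pair_eq_singleton, Sl_singleton, dL1_self]
        ring
      have hG : Gf lam α W' t t s3 = W' t - α * (W' t + lam * dL1 t s3 - W' s3) := by
        unfold Gf Hf
        rw [Boks_self, Sl_singleton, dL1_self]
        ring
      have htri : dL1 s1 s3 ≤ dL1 s1 t + dL1 t s3 := dL1_triangle _ _ _
      have hcm : dL1 s1 t = dL1 t s1 := dL1_comm _ _
      have h14 : 0 ≤ 1 - α - α * lam := by nlinarith
      have Q1 : 0 ≤ (1 - α) * (W'' s1 - W' t - dL1 t s1 + ε) :=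
        mul_nonneg (by nlinarith) (by linarith)
      have Q2 : 0 ≤ (α * lam) * (dL1 t s1 + dL1 t s3 - dL1 s1 s3) :=
        mul_nonneg (mul_nonneg hα0.le h0.le) (by linarith)
      have Q3 : 0 ≤ α * (W'' s3 - W' s3) := mul_nonneg hα0.le (by linarith [hmono s3])
      have Q4 : 0 ≤ (1 - α - α * lam) * dL1 t s1 := mul_nonneg h14 (dL1_nonneg t s1)
      have Q5 : 0 ≤ α * ε := mul_nonneg hα0.le hε.le
      linarith [hinfle t t s3, hm, hG, Q1, Q2, Q3, Q4, Q5]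
    · -- Case B : s3 ∈ {s1, s2}
      have hmem : s3 ∈ ({s1, s2} : Set (ℝ × ℝ)) := by
        rcases h with rfl | rfl
        · exact Set.mem_insert _ _
        · exact Set.mem_insert_of_mem _ rfl
      have hSl'' : Sl lam W'' s3 {s1, s2} ≤ 0 := Sl_nonpos lam h0.le W'' hW''pos s3 _ hmem
      have hmH : Hf lam W'' s1 s2 ≤ m := by
        rw [hmdef]
        unfold Ff
        nlinarith [mul_nonpos_of_nonneg_of_nonpos hα0.le hSl'']
      obtain ⟨t1, ht1q, ht1⟩ := hnear s1 ε hε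
      obtain ⟨t2, ht2q, ht2⟩ := hnear s2 ε hε
      have hYne : (W' '' Boks t1 t2).Nonempty := ⟨_, ⟨t1, left_mem_Boks t1 t2, rfl⟩⟩
      have hYbdd : BddBelow (W' '' Boks t1 t2) := by
        refine ⟨0, ?_⟩
        rintro v ⟨u, _, rfl⟩
        exact hW'pos u
      obtain ⟨v, ⟨c, hcB, rfl⟩, hcv⟩ := Real.lt_sInf_add_pos hYne hε
      have hSl' : -ε ≤ Sl lam W' c (Boks t1 t2) := by
        unfold Sl
        have hgeY : sInf (W' '' Boks t1 t2) ≤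
            sInf ((fun t => W' t + lam * dL1 t c) '' Boks t1 t2) := by
          apply le_csInf (Set.Nonempty.image _ ⟨t1, left_mem_Boks t1 t2⟩)
          rintro v ⟨u, hu, rfl⟩
          have h5 : sInf (W' '' Boks t1 t2) ≤ W' u := csInf_le hYbdd ⟨u, hu, rfl⟩
          have h6 := mul_nonneg h0.le (dL1_nonneg u c)
          simp only
          linarith
        linarith
      have hG' : Gf lam α W' t1 t2 c ≤ Hf lam W' t1 t2 + α * ε := by
        unfold Gf
        have := mul_le_mul_of_nonneg_left hSl' hα0.le
        linarith
      have hHH : Hf lam W' t1 t2 ≤ Hf lam W'' s1 s2 + ε := by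
        unfold Hf
        have htri : dL1 s1 s2 ≤ dL1 s1 t1 + dL1 t1 t2 + dL1 t2 s2 := by
          calc dL1 s1 s2 ≤ dL1 s1 t1 + dL1 t1 s2 := dL1_triangle _ _ _
          _ ≤ dL1 s1 t1 + (dL1 t1 t2 + dL1 t2 s2) := by linarith [dL1_triangle t1 t2 s2]
          _ = _ := by ring
        have hc1 : dL1 s1 t1 = dL1 t1 s1 := dL1_comm _ _
        have hc2 : dL1 s2 t2 = dL1 t2 s2 := dL1_comm _ _
        have R1 : 0 ≤ (lam / 2) * (dL1 t1 s1 + dL1 t1 t2 + dL1 t2 s2 - dL1 s1 s2) := by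
          apply mul_nonneg (by linarith)
          linarith
        have R2 : 0 ≤ ((1 - lam) / 2) * (dL1 t1 s1 + dL1 t2 s2) := by
          apply mul_nonneg (by linarith)
          linarith [dL1_nonneg t1 s1, dL1_nonneg t2 s2]
        linarith
      have Q5 : 0 ≤ (1 - α) * ε := by nlinarith
      linarith [hinfle t1 t2 c, hG', hHH, hmH, Q5]
  have hfin : infG lam α W' ≤ m := by
    by_contra hc
    push_neg at hc
    have := hstep2 ((infG lam α W' - m) / 4) (by linarith)
    linarith
  rw [ge_iff_le]
  linarith
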